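/- In the affine uniqueness setting: if q^{(N-1)} is an ordered probability (N−1)-vector with Gini index G and q_k^{(N)} = a + b·q_k^{(N-1)} (with q_N^{(N-1)} := 0), then the Gini index of q^{(N)} equals b·((N−2)·G + 1)/(N−1). -/
import Mathlib


open Finset Real Filter

/-- Coefficient a_N(G) of the Gini-stable process. -/
noncomputable def giniA (G : ℝ) (N : ℕ) : ℝ :=
  (1 - G) / ((N : ℝ) * (G * ((N : ℝ) - 2) + 1))

/-- Coefficient b_N(G) of the Gini-stable process. -/
noncomputable def giniB (G : ℝ) (N : ℕ) : ℝ :=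
  G * ((N : ℝ) - 1) / (G * ((N : ℝ) - 2) + 1)

/-- Entries p_k^{(N,G)} of the Gini-stable process (1-indexed in k). -/
noncomputable def giniP (G : ℝ) : ℕ → ℕ → ℝ
  | 0, _ => 0
  | 1, k => if k = 1 then 1 else 0
  | N + 2, k =>
      giniA G (N + 2) + giniB G (N + 2) * (if k ≤ N + 1 then giniP G (N + 1) k else 0)

/-- Harmonic number H_m = ∑_{i=1}^m 1/i, with H 0 = 0. -/
noncomputable def H (m : ℕ) : ℝ := ∑ i ∈ Finset.range m, (1 : ℝ) / (i + 1)

theorem stmt5 (N : ℕ) (hN : 3 ≤ N) (G a b : ℝ) (q : ℕ → ℝ)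
    (hord : ∀ k, 1 ≤ k → k < N - 1 → q (k + 1) ≤ q k)
    (hnonneg : ∀ k, 1 ≤ k → k ≤ N - 1 → 0 ≤ q k)
    (hsum : ∑ k ∈ Finset.Icc 1 (N - 1), q k = 1)
    (hGini : (1 / ((N : ℝ) - 2)) *
      ∑ k ∈ Finset.Icc 1 (N - 1), (((N : ℝ) - 1) - 2 * (k : ℝ) + 1) * q k = G) :
    (1 / ((N : ℝ) - 1)) *
      ∑ k ∈ Finset.Icc 1 N,
        ((N : ℝ) - 2 * (k : ℝ) + 1) * (a + b * (if k ≤ N - 1 then q k else 0)) =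
      b * (((N : ℝ) - 2) * G + 1) / ((N : ℝ) - 1) := by
  have hNR : (3:ℝ) ≤ (N:ℝ) := by exact_mod_cast hN
  have hN2 : ((N:ℝ) - 2) ≠ 0 := by linarith
  have hS : ∑ k ∈ Finset.Icc 1 (N - 1), (((N : ℝ) - 1) - 2 * (k : ℝ) + 1) * q k
      = ((N:ℝ) - 2) * G := by
    field_simp at hGini
    linarith [hGini]
  have hk : ∀ n : ℕ, ∑ k ∈ Finset.Icc 1 n, (k:ℝ) = n * (n + 1) / 2 := by
    intro n
    induction n with
    | zero => simp
    | succ m ih =>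
      rw [Finset.sum_Icc_succ_top (by omega)]
      push_cast
      rw [ih]; ring
  have hcastN : ((N - 1 : ℕ) : ℝ) = (N:ℝ) - 1 := by
    have : 1 ≤ N := by omega
    push_cast [Nat.cast_sub this]; ring
  have hT : ∑ k ∈ Finset.Icc 1 (N - 1), ((N:ℝ) - 2 * (k:ℝ) + 1) = (N:ℝ) - 1 := by
    have h1 : ∑ k ∈ Finset.Icc 1 (N - 1), ((N:ℝ) - 2 * (k:ℝ) + 1)
        = (∑ k ∈ Finset.Icc 1 (N - 1), ((N:ℝ) + 1)) - 2 * ∑ k ∈ Finset.Icc 1 (N - 1), (k:ℝ) := by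
      rw [Finset.mul_sum, ← Finset.sum_sub_distrib]
      exact Finset.sum_congr rfl fun k _ => by ring
    rw [h1, Finset.sum_const, hk, Nat.card_Icc]
    have h2 : ((N - 1 + 1 - 1 : ℕ) : ℝ) = (N:ℝ) - 1 := by
      have : N - 1 + 1 - 1 = N - 1 := by omega
      rw [this, hcastN]
    rw [nsmul_eq_mul, h2, hcastN]
    ring
  have hins : Finset.Icc 1 N = insert N (Finset.Icc 1 (N - 1)) := by
    ext k; simp only [Finset.mem_Icc, Finset.mem_insert]; omega
  have hnot : N ∉ Finset.Icc 1 (N - 1) := by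
    simp only [Finset.mem_Icc]; omega
  rw [hins, Finset.sum_insert hnot, if_neg (by omega : ¬ N ≤ N - 1)]
  have hinner : ∑ k ∈ Finset.Icc 1 (N - 1),
      ((N : ℝ) - 2 * (k : ℝ) + 1) * (a + b * (if k ≤ N - 1 then q k else 0))
      = ∑ k ∈ Finset.Icc 1 (N - 1), ((N : ℝ) - 2 * (k : ℝ) + 1) * (a + b * q k) := by
    refine Finset.sum_congr rfl fun k hkm => ?_
    rw [if_pos (Finset.mem_Icc.mp hkm).2]
  rw [hinner]
  have key : ∑ k ∈ Finset.Icc 1 (N - 1), ((N : ℝ) - 2 * (k : ℝ) + 1) * (a + b * q k)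
      = a * (∑ k ∈ Finset.Icc 1 (N - 1), ((N:ℝ) - 2 * (k:ℝ) + 1))
        + b * (∑ k ∈ Finset.Icc 1 (N - 1), (((N : ℝ) - 1) - 2 * (k : ℝ) + 1) * q k)
        + b * (∑ k ∈ Finset.Icc 1 (N - 1), q k) := by
    rw [Finset.mul_sum, Finset.mul_sum, Finset.mul_sum, ← Finset.sum_add_distrib,
      ← Finset.sum_add_distrib]
    exact Finset.sum_congr rfl fun k _ => by ring
  rw [key, hT, hS, hsum]
  ring
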